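/- Fix a timestep Δt > 0, a step n, a particle index β, mesh vectors u_k^{n+1} ∈ ℝ², a position Q_β^n ∈ ℝ², a momentum P_β^{n+1} ∈ ℝ², a linear map J_β^n : ℝ² → ℝ², and a vector v ∈ ℝ². Define J_β^{n+1} by J_β^{n+1} w = J_β^n w + Δt Σ_k (∇ψ_k(Q_β^n) · (J_β^n w)) u_k^{n+1} for all w, and define Q_β^{n+1} = Q_β^n + Δt Σ_k u_k^{n+1} ψ_k(Q_β^n). Then the derivative at ε = 0 of the map ε ↦ P_β^{n+1} · ( (Q_β^{n+1} + ε J_β^{n+1} v) − (Q_β^n + ε J_β^n v) − Δt Σ_k ψ_k(Q_β^n + ε J_β^n v) u_k^{n+1} ) equals 0; that is, the discrete transformation δQ_β^n = J_β^n v is a symmetry of each term of the discrete action. -/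

import Mathlib

open scoped RealInnerProductSpace BigOperators

/-- The discrete transformation `δQ_β^n = J_β^n v` (with the discrete Jacobian
update `J_β^{n+1} w = J_β^n w + Δt Σ_k (∇ψ_k(Q_β^n) · (J_β^n w)) u_k^{n+1}` and the symplectic
Euler position update `Q_β^{n+1} = Q_β^n + Δt Σ_k ψ_k(Q_β^n) u_k^{n+1}`) is a symmetry of each
term of the discrete action: the derivative at `ε = 0` of
`ε ↦ P_β^{n+1} · ((Q_β^{n+1} + ε J_β^{n+1} v) − (Q_β^n + ε J_β^n v) − Δt Σ_k ψ_k(Q_β^n + ε J_β^n v) u_k^{n+1})`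
equals `0`. -/
theorem discrete_action_term_symmetry
    {ng : ℕ} (n : ℕ)
    (ψ : Fin ng → EuclideanSpace ℝ (Fin 2) → ℝ)
    (hψ : ∀ k, Differentiable ℝ (ψ k))
    (Δt : ℝ) (hΔt : 0 < Δt)
    (u : Fin ng → EuclideanSpace ℝ (Fin 2))
    (Qn Pn1 : EuclideanSpace ℝ (Fin 2))
    (Jn : EuclideanSpace ℝ (Fin 2) →L[ℝ] EuclideanSpace ℝ (Fin 2))
    (v : EuclideanSpace ℝ (Fin 2)) :
    HasDerivAt
      (fun ε : ℝ =>
        ⟪Pn1,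
          ((Qn + Δt • ∑ k, ψ k Qn • u k)
              + ε • (Jn v + Δt • ∑ k, ⟪gradient (ψ k) Qn, Jn v⟫ • u k))
            - (Qn + ε • Jn v)
            - Δt • ∑ k, ψ k (Qn + ε • Jn v) • u k⟫)
      0 0 := by
  have hline : HasDerivAt (fun ε : ℝ => Qn + ε • Jn v) (Jn v) 0 := by
    simpa using ((hasDerivAt_id (0:ℝ)).smul_const (Jn v)).const_add Qn
  have hψε : ∀ k, HasDerivAt (fun ε : ℝ => ψ k (Qn + ε • Jn v))
      ⟪gradient (ψ k) Qn, Jn v⟫ 0 := by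
    intro k
    have hg : HasGradientAt (ψ k) (gradient (ψ k) Qn) Qn :=
      ((hψ k) Qn).hasGradientAt
    have hF : HasFDerivAt (ψ k) ((InnerProductSpace.toDual ℝ _) (gradient (ψ k) Qn))
        (Qn + (0:ℝ) • Jn v) := by simpa using hg.hasFDerivAt
    have := hF.comp_hasDerivAt (x := (0:ℝ)) hline
    simpa [Function.comp_def] using this
  have hsum : HasDerivAt
      (fun ε : ℝ => ∑ k, ψ k (Qn + ε • Jn v) • u k)
      (∑ k, ⟪gradient (ψ k) Qn, Jn v⟫ • u k) 0 :=
    HasDerivAt.fun_sum fun k _ => (hψε k).smul_const (u k)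
  set S : EuclideanSpace ℝ (Fin 2) := ∑ k, ⟪gradient (ψ k) Qn, Jn v⟫ • u k with hS
  have hf : HasDerivAt
      (fun ε : ℝ =>
        ((Qn + Δt • ∑ k, ψ k Qn • u k) + ε • (Jn v + Δt • S))
          - (Qn + ε • Jn v) - Δt • ∑ k, ψ k (Qn + ε • Jn v) • u k)
      ((Jn v + Δt • S) - Jn v - Δt • S) 0 := by
    exact ((((hasDerivAt_id (0:ℝ)).smul_const (Jn v + Δt • S)).const_add
      (Qn + Δt • ∑ k, ψ k Qn • u k)).sub hline).sub (hsum.const_smul Δt) |>.congr_deriv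
      (by simp)
  have hf0 : ((Jn v + Δt • S) - Jn v - Δt • S) = 0 := by abel
  rw [hf0] at hf
  have := ((innerSL ℝ Pn1).hasFDerivAt).comp_hasDerivAt (x := (0:ℝ)) hf
  simpa [Function.comp_def] using this
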